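/- Every finite tree (a finite connected acyclic simple graph) admits a planar straight-line drawing in which every edge has length exactly 1. -/

import Mathlib

noncomputable section

/-- The Euclidean plane. -/
abbrev Plane : Type := EuclideanSpace ℝ (Fin 2)

/-- A planar straight-line drawing of a simple graph `G`. -/
def IsPlanarDrawing {V : Type} (G : SimpleGraph V) (ρ : V → Plane) : Prop :=
  Function.Injective ρ ∧
  (∀ u v w : V, G.Adj u v → w ≠ u → w ≠ v → ρ w ∉ segment ℝ (ρ u) (ρ v)) ∧
  (∀ u v x y : V, G.Adj u v → G.Adj x y → s(u, v) ≠ s(x, y) →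
    segment ℝ (ρ u) (ρ v) ∩ segment ℝ (ρ x) (ρ y) =
      {p : Plane | ∃ w : V, (w = u ∨ w = v) ∧ (w = x ∨ w = y) ∧ p = ρ w})

open Real

namespace TreeDraw

abbrev Plane : Type := EuclideanSpace ℝ (Fin 2)

def e (θ : ℝ) : Plane := WithLp.toLp 2 ![Real.cos θ, Real.sin θ]

@[simp] lemma e_zero (θ : ℝ) : e θ 0 = Real.cos θ := rfl
@[simp] lemma e_one (θ : ℝ) : e θ 1 = Real.sin θ := rfl

@[simp] lemma plane_add_apply (x y : Plane) (i : Fin 2) : (x + y) i = x i + y i := rfl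
@[simp] lemma plane_sub_apply (x y : Plane) (i : Fin 2) : (x - y) i = x i - y i := rfl
@[simp] lemma plane_smul_apply (a : ℝ) (x : Plane) (i : Fin 2) : (a • x) i = a * x i := rfl
@[simp] lemma plane_zero_apply (i : Fin 2) : (0 : Plane) i = 0 := rfl
@[simp] lemma plane_neg_apply (x : Plane) (i : Fin 2) : (-x) i = -(x i) := rfl

lemma plane_ext {x y : Plane} (h0 : x 0 = y 0) (h1 : x 1 = y 1) : x = y := by
  ext i; fin_cases i <;> assumption

lemma norm_e (θ : ℝ) : ‖e θ‖ = 1 := by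
  rw [EuclideanSpace.norm_eq]
  simp [Fin.sum_univ_two, Real.cos_sq_add_sin_sq]

/-- "dot with direction m" functional -/
def D (z : Plane) (m : ℝ) : ℝ := z 0 * Real.cos m + z 1 * Real.sin m
/-- cross product with direction m -/
def X (z : Plane) (m : ℝ) : ℝ := z 1 * Real.cos m - z 0 * Real.sin m

lemma D_add (x y : Plane) (m : ℝ) : D (x + y) m = D x m + D y m := by simp [D]; ring
lemma D_smul (a : ℝ) (x : Plane) (m : ℝ) : D (a • x) m = a * D x m := by simp [D]; ring
@[simp] lemma D_zero (m : ℝ) : D 0 m = 0 := by simp [D]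
lemma D_e (θ m : ℝ) : D (e θ) m = Real.cos (θ - m) := by
  simp [D, Real.cos_sub]
lemma X_add (x y : Plane) (m : ℝ) : X (x + y) m = X x m + X y m := by simp [X]; ring
lemma X_smul (a : ℝ) (x : Plane) (m : ℝ) : X (a • x) m = a * X x m := by simp [X]; ring
lemma X_e (θ m : ℝ) : X (e θ) m = Real.sin (θ - m) := by
  simp [X, Real.sin_sub]

def c0 : ℝ := Real.sqrt 2 / 2

lemma c0_pos : 0 < c0 := by
  have : (0:ℝ) < Real.sqrt 2 := Real.sqrt_pos.mpr (by norm_num)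
  unfold c0; linarith

lemma cos_ge_c0 {a m : ℝ} (ha0 : 0 ≤ a) (ha : a ≤ π/4) (hm0 : 0 ≤ m) (hm : m ≤ π/4) :
    c0 ≤ Real.cos (a - m) := by
  have habs : |a - m| ≤ π/4 := abs_le.mpr ⟨by linarith, by linarith⟩
  have h1 : Real.cos (π/4) ≤ Real.cos |a - m| :=
    Real.cos_le_cos_of_nonneg_of_le_pi (abs_nonneg _) (by linarith [Real.pi_pos]) habs
  rw [Real.cos_abs] at h1
  calc c0 = Real.cos (π/4) := by rw [Real.cos_pi_div_four]; rfl
    _ ≤ _ := h1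


/-- decomposition of a unit vector in a cone -/
lemma e_rep {a b θ : ℝ} (h1 : a ≤ θ) (h2 : θ ≤ b) (hab : a < b) (hb : b - a ≤ π/4) :
    ∃ s t : ℝ, 0 ≤ s ∧ 0 ≤ t ∧ e θ = s • e a + t • e b := by
  have hsin : 0 < Real.sin (b - a) :=
    Real.sin_pos_of_pos_of_lt_pi (by linarith) (by nlinarith [Real.pi_gt_three])
  refine ⟨Real.sin (b - θ) / Real.sin (b - a), Real.sin (θ - a) / Real.sin (b - a), ?_, ?_, ?_⟩
  · exact div_nonneg (Real.sin_nonneg_of_nonneg_of_le_pi (by linarith)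
      (by nlinarith [Real.pi_gt_three])) hsin.le
  · exact div_nonneg (Real.sin_nonneg_of_nonneg_of_le_pi (by linarith)
      (by nlinarith [Real.pi_gt_three])) hsin.le
  · apply plane_ext <;>
    · simp only [plane_add_apply, plane_smul_apply, e_zero, e_one]
      rw [div_mul_eq_mul_div, div_mul_eq_mul_div, ← add_div, eq_comm,
        div_eq_iff hsin.ne']
      rw [Real.sin_sub, Real.sin_sub, Real.sin_sub]
      ring


open SimpleGraph Walk

section Graph

variable {V : Type} [DecidableEq V] {G : SimpleGraph V}

variable (hu : ∀ ⦃u v : V⦄ (p q : G.Walk u v), p.IsPath → q.IsPath → p = q)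
variable (hpre : G.Preconnected) (r : V)

/-- the chosen path from u to the root r -/
def pth (u : V) : G.Walk u r := ((hpre u r).some.toPath : G.Path u r).1

lemma pth_isPath (u : V) : (pth hpre r u).IsPath := ((hpre u r).some.toPath).2

def parent (u : V) : V := (pth hpre r u).getVert 1

def dep (u : V) : ℕ := (pth hpre r u).length

include hu

lemma pth_r : pth hpre r r = Walk.nil :=
  hu _ _ (pth_isPath hpre r r) Walk.IsPath.nil

lemma pth_cons {u : V} (h : u ≠ r) :
    ∃ a : G.Adj u (parent hpre r u), pth hpre r u = Walk.cons a (pth hpre r (parent hpre r u)) := by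
  cases hq : pth hpre r u with
  | nil => exact absurd rfl h
  | @cons _ v _ a q =>
    have hv : parent hpre r u = v := by
      unfold parent; rw [hq]
      rw [Walk.getVert_cons_succ, Walk.getVert_zero]
    have hP := pth_isPath hpre r u
    rw [hq] at hP
    have hq2 : q = pth hpre r v := hu q (pth hpre r v) hP.of_cons (pth_isPath hpre r v)
    subst hq2
    cases hv
    exact ⟨a, rfl⟩

lemma adj_parent {u : V} (h : u ≠ r) : G.Adj u (parent hpre r u) :=
  (pth_cons hu hpre r h).choose

lemma dep_parent {u : V} (h : u ≠ r) : dep hpre r (parent hpre r u) + 1 = dep hpre r u := by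
  obtain ⟨a, hc⟩ := pth_cons hu hpre r h
  unfold dep; rw [hc, Walk.length_cons]

lemma dep_parent_lt {u : V} (h : u ≠ r) : dep hpre r (parent hpre r u) < dep hpre r u := by
  have := dep_parent hu hpre r h; omega

/-- ancestors of u (including u and r), as the support of the path -/
def supp (u : V) : List V := (pth hpre r u).support

omit hu
lemma self_mem_supp (u : V) : u ∈ supp hpre r u := Walk.start_mem_support _
lemma r_mem_supp (u : V) : r ∈ supp hpre r u := Walk.end_mem_support _
include hu

lemma supp_r : supp hpre r r = [r] := by unfold supp; rw [pth_r hu hpre r]; rfl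

lemma supp_cons {u : V} (h : u ≠ r) :
    supp hpre r u = u :: supp hpre r (parent hpre r u) := by
  obtain ⟨a, hc⟩ := pth_cons hu hpre r h
  unfold supp; rw [hc, Walk.support_cons]

lemma pth_eq_dropUntil {u w : V} (hw : w ∈ supp hpre r u) :
    pth hpre r w = (pth hpre r u).dropUntil w hw :=
  hu _ _ (pth_isPath hpre r w) ((pth_isPath hpre r u).dropUntil hw)

lemma supp_subset {u w : V} (hw : w ∈ supp hpre r u) :
    supp hpre r w ⊆ supp hpre r u := by
  unfold supp; rw [pth_eq_dropUntil hu hpre r hw]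
  exact Walk.support_dropUntil_subset _ _

lemma dep_le {u w : V} (hw : w ∈ supp hpre r u) : dep hpre r w ≤ dep hpre r u := by
  unfold dep; rw [pth_eq_dropUntil hu hpre r hw]
  exact Walk.length_dropUntil_le _ _

lemma supp_strict {u w : V} (hw : w ∈ supp hpre r u) (hne : w ≠ u) :
    u ≠ r ∧ w ∈ supp hpre r (parent hpre r u) := by
  have hur : u ≠ r := by
    rintro rfl
    rw [supp_r hu hpre _] at hw
    simp at hw; exact hne hw
  refine ⟨hur, ?_⟩
  rw [supp_cons hu hpre r hur] at hw
  rcases List.mem_cons.mp hw with h | h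
  · exact absurd h hne
  · exact h

lemma dep_lt {u w : V} (hw : w ∈ supp hpre r u) (hne : w ≠ u) :
    dep hpre r w < dep hpre r u := by
  obtain ⟨hur, hw'⟩ := supp_strict hu hpre r hw hne
  have := dep_le hu hpre r hw'
  have := dep_parent hu hpre r hur
  omega

lemma supp_anti {u w : V} (h1 : w ∈ supp hpre r u) (h2 : u ∈ supp hpre r w) : u = w := by
  by_contra hne
  have a := dep_lt hu hpre r h1 (fun h => hne h.symm)
  have b := dep_lt hu hpre r h2 hne
  omega

lemma parent_mem_supp {u : V} (h : u ≠ r) : parent hpre r u ∈ supp hpre r u := by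
  rw [supp_cons hu hpre r h]
  exact List.mem_cons_of_mem _ (self_mem_supp hpre r _)

/-- there is a child of v on the path to x -/
theorem child_exists : ∀ (x v : V), v ∈ supp hpre r x → v ≠ x →
    ∃ c, c ∈ supp hpre r x ∧ c ≠ r ∧ parent hpre r c = v := by
  intro x v hmem hne
  have hxr : x ≠ r := by
    rintro rfl
    rw [supp_r hu hpre _] at hmem
    simp at hmem; exact hne hmem
  obtain ⟨_, hmem'⟩ := supp_strict hu hpre r hmem (fun h => hne h)
  by_cases hv : v = parent hpre r x
  · exact ⟨x, self_mem_supp hpre r x, hxr, hv.symm⟩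
  · obtain ⟨c, hc1, hc2, hc3⟩ := child_exists (parent hpre r x) v hmem' hv
    exact ⟨c, supp_subset hu hpre r (parent_mem_supp hu hpre r hxr) hc1, hc2, hc3⟩
termination_by x => dep hpre r x
decreasing_by exact dep_parent_lt hu hpre r hxr

theorem meet_exists : ∀ (u x : V), x ∉ supp hpre r u → u ∉ supp hpre r x →
    ∃ a b, a ∈ supp hpre r u ∧ b ∈ supp hpre r x ∧ a ≠ r ∧ b ≠ r ∧
      parent hpre r a = parent hpre r b ∧ a ≠ b := by
  intro u x hxu hux
  have hur : u ≠ r := by rintro rfl; exact hux (r_mem_supp hpre _ x)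
  have hxr : x ≠ r := by rintro rfl; exact hxu (r_mem_supp hpre _ u)
  have hne : u ≠ x := fun h => hux (h ▸ self_mem_supp hpre r x)
  by_cases hpp : parent hpre r u = parent hpre r x
  · exact ⟨u, x, self_mem_supp hpre r u, self_mem_supp hpre r x, hur, hxr, hpp, hne⟩
  · by_cases hc : parent hpre r u ∈ supp hpre r x
    · -- recurse on (u, parent x)
      have hpxu : parent hpre r x ∉ supp hpre r u := by
        intro hmem
        have h1 : parent hpre r u ∈ supp hpre r (parent hpre r x) := by
          have hpux : parent hpre r u ≠ x := by
            rintro h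
            exact hxu (h ▸ supp_subset hu hpre r (parent_mem_supp hu hpre r hur)
              (self_mem_supp hpre r _))
          exact (supp_strict hu hpre r hc hpux).2
        have h2 : parent hpre r x ∈ supp hpre r (parent hpre r u) := by
          have hpxu' : parent hpre r x ≠ u := by
            rintro h
            exact hux (h ▸ supp_subset hu hpre r (parent_mem_supp hu hpre r hxr)
              (self_mem_supp hpre r _))
          exact (supp_strict hu hpre r hmem hpxu').2
        exact hpp (supp_anti hu hpre r h2 h1)
      have hupx : u ∉ supp hpre r (parent hpre r x) :=
        fun h => hux (supp_subset hu hpre r (parent_mem_supp hu hpre r hxr) h)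
      obtain ⟨a, b, ha, hb, har, hbr, hab, hne'⟩ :=
        meet_exists u (parent hpre r x) hpxu hupx
      exact ⟨a, b, ha, supp_subset hu hpre r (parent_mem_supp hu hpre r hxr) hb,
        har, hbr, hab, hne'⟩
    · -- recurse on (parent u, x)
      have hxpu : x ∉ supp hpre r (parent hpre r u) :=
        fun h => hxu (supp_subset hu hpre r (parent_mem_supp hu hpre r hur) h)
      obtain ⟨a, b, ha, hb, har, hbr, hab, hne'⟩ :=
        meet_exists (parent hpre r u) x hxpu hc
      exact ⟨a, b, supp_subset hu hpre r (parent_mem_supp hu hpre r hur) ha, hb,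
        har, hbr, hab, hne'⟩
termination_by u x => dep hpre r u + dep hpre r x
decreasing_by
  · have := dep_parent_lt hu hpre r hxr; omega
  · have := dep_parent_lt hu hpre r hur; omega

/-- adjacency is exactly the parent relation -/
lemma adj_orient {a b : V} (hab : G.Adj a b) :
    (a ≠ r ∧ parent hpre r a = b) ∨ (b ≠ r ∧ parent hpre r b = a) := by
  by_cases hmem : a ∈ supp hpre r b
  · right
    have hne : a ≠ b := hab.ne
    have hbr : b ≠ r := (supp_strict hu hpre r hmem hne).1
    -- the single-edge walk b → a is a path
    have hsingle : (Walk.cons hab.symm Walk.nil : G.Walk b a).IsPath := by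
      simp [Walk.cons_isPath_iff, hab.ne']
    have htake : (pth hpre r b).takeUntil a hmem = Walk.cons hab.symm Walk.nil :=
      hu _ _ ((pth_isPath hpre r b).takeUntil hmem) hsingle
    have hdrop : (pth hpre r b).dropUntil a hmem = pth hpre r a :=
      (pth_eq_dropUntil hu hpre r hmem).symm
    have hspec := (pth hpre r b).take_spec hmem
    rw [htake, hdrop, Walk.cons_append, Walk.nil_append] at hspec
    refine ⟨hbr, ?_⟩
    show (pth hpre r b).getVert 1 = a
    rw [← hspec, Walk.getVert_cons_succ, Walk.getVert_zero]
  · left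
    have har : a ≠ r := by
      rintro rfl
      exact hmem (r_mem_supp hpre _ b)
    have hW : (Walk.cons hab (pth hpre r b) : G.Walk a r).IsPath := by
      rw [Walk.cons_isPath_iff]
      exact ⟨pth_isPath hpre r b, hmem⟩
    have heq := hu _ _ (pth_isPath hpre r a) hW
    refine ⟨har, ?_⟩
    show (pth hpre r a).getVert 1 = b
    rw [heq, Walk.getVert_cons_succ, Walk.getVert_zero]

end Graph

section Emb

variable {V : Type} [Fintype V] [DecidableEq V] {G : SimpleGraph V}
variable (hu : ∀ ⦃u v : V⦄ (p q : G.Walk u v), p.IsPath → q.IsPath → p = q)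
variable (hpre : G.Preconnected) (r : V)

def ivl (hu0 : ∀ ⦃u v : V⦄ (p q : G.Walk u v), p.IsPath → q.IsPath → p = q)
    (hpre0 : G.Preconnected) (r0 : V) (u : V) : ℝ × ℝ :=
  if h : u = r0 then (0, π/4)
  else
    let p := ivl hu0 hpre0 r0 (parent hpre0 r0 u)
    let k : ℕ := (Fintype.equivFin V u : ℕ)
    let w := (p.2 - p.1) / (3 * Fintype.card V)
    (p.1 + (3*k+1) * w, p.1 + (3*k+2) * w)
termination_by dep hpre0 r0 u
decreasing_by exact dep_parent_lt hu0 hpre0 r0 h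

def lo (u : V) : ℝ := (ivl hu hpre r u).1
def hi (u : V) : ℝ := (ivl hu hpre r u).2
def th (u : V) : ℝ := (lo hu hpre r u + hi hu hpre r u) / 2

lemma ivl_r : ivl hu hpre r r = (0, π/4) := by rw [ivl]; simp

lemma ivl_ne {u : V} (h : u ≠ r) :
    lo hu hpre r u = lo hu hpre r (parent hpre r u)
      + (3*(Fintype.equivFin V u : ℕ)+1) *
        ((hi hu hpre r (parent hpre r u) - lo hu hpre r (parent hpre r u)) / (3 * Fintype.card V))
    ∧ hi hu hpre r u = lo hu hpre r (parent hpre r u)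
      + (3*(Fintype.equivFin V u : ℕ)+2) *
        ((hi hu hpre r (parent hpre r u) - lo hu hpre r (parent hpre r u)) / (3 * Fintype.card V)) := by
  constructor <;> (unfold lo hi; rw [ivl]; simp [h])

lemma card_pos'' {W : Type} [Fintype W] (r0 : W) : 0 < (Fintype.card W : ℝ) := by
  have : Nonempty W := ⟨r0⟩
  exact_mod_cast Fintype.card_pos


theorem ivl_bounds : ∀ u : V, 0 ≤ lo hu hpre r u ∧ lo hu hpre r u < hi hu hpre r u
    ∧ hi hu hpre r u ≤ π/4 := by
  intro u
  by_cases h : u = r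
  · subst h
    unfold lo hi
    rw [ivl_r]
    refine ⟨le_refl 0, ?_, le_refl _⟩
    have := Real.pi_pos; simp; linarith
  · obtain ⟨h1, h2⟩ := ivl_ne hu hpre r h
    obtain ⟨ih1, ih2, ih3⟩ := ivl_bounds (parent hpre r u)
    set lp := lo hu hpre r (parent hpre r u)
    set hp := hi hu hpre r (parent hpre r u)
    have hN : 0 < (Fintype.card V : ℝ) := card_pos'' r
    have hk : ((Fintype.equivFin V u : ℕ) : ℝ) < (Fintype.card V : ℝ) := by
      exact_mod_cast (Fintype.equivFin V u).isLt
    have hk0 : (0:ℝ) ≤ ((Fintype.equivFin V u : ℕ) : ℝ) := by positivity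
    have hk1 : ((Fintype.equivFin V u : ℕ) : ℝ) + 1 ≤ (Fintype.card V : ℝ) := by
      exact_mod_cast (Fintype.equivFin V u).isLt
    have hw : 0 < (hp - lp) / (3 * Fintype.card V) := by
      apply div_pos (by linarith); linarith
    set w := (hp - lp) / (3 * Fintype.card V) with hwdef
    have h3N : (3 * (Fintype.equivFin V u : ℕ) + 2 : ℝ) * w ≤ 3 * (Fintype.card V : ℝ) * w := by
      apply mul_le_mul_of_nonneg_right _ hw.le
      linarith [hk1]
    have hhp : 3 * (Fintype.card V : ℝ) * w = hp - lp := by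
      rw [hwdef]; field_simp
    rw [h1, h2]
    refine ⟨by nlinarith, by nlinarith, by nlinarith⟩
termination_by u => dep hpre r u
decreasing_by exact dep_parent_lt hu hpre r h

lemma ivl_nested {u : V} (h : u ≠ r) :
    lo hu hpre r (parent hpre r u) ≤ lo hu hpre r u
      ∧ hi hu hpre r u ≤ hi hu hpre r (parent hpre r u) := by
  obtain ⟨h1, h2⟩ := ivl_ne hu hpre r h
  obtain ⟨ih1, ih2, ih3⟩ := ivl_bounds hu hpre r (parent hpre r u)
  set lp := lo hu hpre r (parent hpre r u)
  set hp := hi hu hpre r (parent hpre r u)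
  have hN : 0 < (Fintype.card V : ℝ) := card_pos'' r
  have hk : ((Fintype.equivFin V u : ℕ) : ℝ) < (Fintype.card V : ℝ) := by
    exact_mod_cast (Fintype.equivFin V u).isLt
  have hk0 : (0:ℝ) ≤ ((Fintype.equivFin V u : ℕ) : ℝ) := by positivity
  have hk1 : ((Fintype.equivFin V u : ℕ) : ℝ) + 1 ≤ (Fintype.card V : ℝ) := by
    exact_mod_cast (Fintype.equivFin V u).isLt
  have hw : 0 < (hp - lp) / (3 * Fintype.card V) := by
    apply div_pos (by linarith); linarith
  set w := (hp - lp) / (3 * Fintype.card V) with hwdef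
  have hhp : 3 * (Fintype.card V : ℝ) * w = hp - lp := by
    rw [hwdef]; field_simp
  rw [h1, h2]
  constructor
  · nlinarith
  · nlinarith

lemma siblings_disjoint {a b : V} (hp : parent hpre r a = parent hpre r b)
    (hne : a ≠ b) (har : a ≠ r) (hbr : b ≠ r) :
    hi hu hpre r a < lo hu hpre r b ∨ hi hu hpre r b < lo hu hpre r a := by
  obtain ⟨ha1, ha2⟩ := ivl_ne hu hpre r har
  obtain ⟨hb1, hb2⟩ := ivl_ne hu hpre r hbr
  rw [hp] at ha1 ha2
  obtain ⟨ih1, ih2, ih3⟩ := ivl_bounds hu hpre r (parent hpre r b)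
  set lp := lo hu hpre r (parent hpre r b)
  set hp' := hi hu hpre r (parent hpre r b)
  have hN : 0 < (Fintype.card V : ℝ) := card_pos'' r
  have hw : 0 < (hp' - lp) / (3 * Fintype.card V) := by
    apply div_pos (by linarith); linarith
  set w := (hp' - lp) / (3 * Fintype.card V) with hwdef
  have hkne : (Fintype.equivFin V a : ℕ) ≠ (Fintype.equivFin V b : ℕ) := by
    intro hk
    exact hne ((Fintype.equivFin V).injective (Fin.val_injective hk))
  rcases Nat.lt_or_ge (Fintype.equivFin V a : ℕ) (Fintype.equivFin V b : ℕ) with hk | hk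
  · left
    rw [ha2, hb1]
    have : ((Fintype.equivFin V a : ℕ) : ℝ) + 1 ≤ ((Fintype.equivFin V b : ℕ) : ℝ) := by
      exact_mod_cast hk
    nlinarith
  · have hk' : (Fintype.equivFin V b : ℕ) < (Fintype.equivFin V a : ℕ) :=
      lt_of_le_of_ne hk (Ne.symm hkne)
    right
    rw [hb2, ha1]
    have : ((Fintype.equivFin V b : ℕ) : ℝ) + 1 ≤ ((Fintype.equivFin V a : ℕ) : ℝ) := by
      exact_mod_cast hk'
    nlinarith

lemma th_mem (u : V) : lo hu hpre r u < th hu hpre r u ∧ th hu hpre r u < hi hu hpre r u := by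
  obtain ⟨h1, h2, h3⟩ := ivl_bounds hu hpre r u
  unfold th; constructor <;> linarith

lemma th_range (u : V) : 0 ≤ th hu hpre r u ∧ th hu hpre r u ≤ π/4 := by
  obtain ⟨h1, h2, h3⟩ := ivl_bounds hu hpre r u
  obtain ⟨h4, h5⟩ := th_mem hu hpre r u
  constructor <;> linarith

theorem ivl_nest : ∀ u c : V, c ∈ supp hpre r u →
    lo hu hpre r c ≤ lo hu hpre r u ∧ hi hu hpre r u ≤ hi hu hpre r c := by
  intro u c hc
  by_cases hcu : c = u
  · subst hcu; exact ⟨le_refl _, le_refl _⟩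
  · obtain ⟨hur, hc'⟩ := supp_strict hu hpre r hc hcu
    obtain ⟨ih1, ih2⟩ := ivl_nest (parent hpre r u) c hc'
    obtain ⟨n1, n2⟩ := ivl_nested hu hpre r hur
    exact ⟨le_trans ih1 n1, le_trans n2 ih2⟩
termination_by u => dep hpre r u
decreasing_by exact dep_parent_lt hu hpre r hur

def emb (hu0 : ∀ ⦃u v : V⦄ (p q : G.Walk u v), p.IsPath → q.IsPath → p = q)
    (hpre0 : G.Preconnected) (r0 : V) (u : V) : Plane :=
  if h : u = r0 then 0 else emb hu0 hpre0 r0 (parent hpre0 r0 u) + e (th hu0 hpre0 r0 u)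
termination_by dep hpre0 r0 u
decreasing_by exact dep_parent_lt hu0 hpre0 r0 h

lemma emb_r : emb hu hpre r r = 0 := by rw [emb]; simp

lemma emb_ne {u : V} (h : u ≠ r) :
    emb hu hpre r u = emb hu hpre r (parent hpre r u) + e (th hu hpre r u) := by
  rw [emb]; simp [h]

/-- main cone invariant -/
theorem inv : ∀ u c : V, c ∈ supp hpre r u → c ≠ r →
    (∃ s t : ℝ, 0 ≤ s ∧ 0 ≤ t ∧
      emb hu hpre r u - emb hu hpre r (parent hpre r c)
        = s • e (lo hu hpre r c) + t • e (hi hu hpre r c)) ∧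
    (∀ m : ℝ, 0 ≤ m → m ≤ π/4 →
      c0 ≤ D (emb hu hpre r u - emb hu hpre r (parent hpre r c)) m) := by
  intro u c hc hcr
  obtain ⟨bc1, bc2, bc3⟩ := ivl_bounds hu hpre r c
  by_cases hcu : c = u
  · subst hcu
    have hdiff : emb hu hpre r c - emb hu hpre r (parent hpre r c) = e (th hu hpre r c) := by
      rw [emb_ne hu hpre r hcr]; abel
    rw [hdiff]
    obtain ⟨t1, t2⟩ := th_mem hu hpre r c
    obtain ⟨t3, t4⟩ := th_range hu hpre r c
    constructor
    · exact e_rep t1.le t2.le bc2 (by linarith)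
    · intro m hm1 hm2
      rw [D_e]
      exact cos_ge_c0 t3 t4 hm1 hm2
  · obtain ⟨hur, hc'⟩ := supp_strict hu hpre r hc hcu
    obtain ⟨⟨s, t, hs, ht, hrep⟩, hD⟩ := inv (parent hpre r u) c hc' hcr
    have hdiff : emb hu hpre r u - emb hu hpre r (parent hpre r c)
        = (emb hu hpre r (parent hpre r u) - emb hu hpre r (parent hpre r c))
          + e (th hu hpre r u) := by
      rw [emb_ne hu hpre r hur]; abel
    obtain ⟨n1, n2⟩ := ivl_nest hu hpre r u c hc
    obtain ⟨t1, t2⟩ := th_mem hu hpre r u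
    obtain ⟨t3, t4⟩ := th_range hu hpre r u
    obtain ⟨s2, t2', hs2, ht2', hrep2⟩ :=
      e_rep (show lo hu hpre r c ≤ th hu hpre r u by linarith)
        (show th hu hpre r u ≤ hi hu hpre r c by linarith) bc2 (by linarith)
    constructor
    · refine ⟨s + s2, t + t2', by linarith, by linarith, ?_⟩
      rw [hdiff, hrep, hrep2]
      module
    · intro m hm1 hm2
      rw [hdiff, D_add, D_e]
      have := hD m hm1 hm2
      have hcos : c0 ≤ Real.cos (th hu hpre r u - m) := cos_ge_c0 t3 t4 hm1 hm2
      have := c0_pos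
      linarith
termination_by u c => dep hpre r u
decreasing_by exact dep_parent_lt hu hpre r hur

/-- separation of distinct sibling cones -/
lemma sep' {a b : V} (hlt : hi hu hpre r a < lo hu hpre r b) {z : Plane}
    (h1 : ∃ s t : ℝ, 0 ≤ s ∧ 0 ≤ t ∧ z = s • e (lo hu hpre r a) + t • e (hi hu hpre r a))
    (h2 : ∃ s t : ℝ, 0 ≤ s ∧ 0 ≤ t ∧ z = s • e (lo hu hpre r b) + t • e (hi hu hpre r b)) :
    z = 0 := by
  obtain ⟨ba1, ba2, ba3⟩ := ivl_bounds hu hpre r a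
  obtain ⟨bb1, bb2, bb3⟩ := ivl_bounds hu hpre r b
  obtain ⟨s, t, hs, ht, hza⟩ := h1
  obtain ⟨s', t', hs', ht', hzb⟩ := h2
  have hπ := Real.pi_gt_three
  have hXa : X z (hi hu hpre r a) = s * Real.sin (lo hu hpre r a - hi hu hpre r a) := by
    rw [hza, X_add, X_smul, X_smul, X_e, X_e, sub_self, Real.sin_zero]
    ring
  have hXb : X z (hi hu hpre r a)
      = s' * Real.sin (lo hu hpre r b - hi hu hpre r a)
        + t' * Real.sin (hi hu hpre r b - hi hu hpre r a) := by
    rw [hzb, X_add, X_smul, X_smul, X_e, X_e]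
  have hS0 : Real.sin (lo hu hpre r a - hi hu hpre r a) ≤ 0 := by
    rw [show lo hu hpre r a - hi hu hpre r a = -(hi hu hpre r a - lo hu hpre r a) by ring,
      Real.sin_neg]
    have : 0 ≤ Real.sin (hi hu hpre r a - lo hu hpre r a) :=
      Real.sin_nonneg_of_nonneg_of_le_pi (by linarith) (by linarith)
    linarith
  have hS1 : 0 < Real.sin (lo hu hpre r b - hi hu hpre r a) :=
    Real.sin_pos_of_pos_of_lt_pi (by linarith) (by linarith)
  have hS2 : 0 < Real.sin (hi hu hpre r b - hi hu hpre r a) :=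
    Real.sin_pos_of_pos_of_lt_pi (by linarith) (by linarith)
  have hs'0 : s' = 0 ∧ t' = 0 := by
    constructor <;> nlinarith
  rw [hzb, hs'0.1, hs'0.2, zero_smul, zero_smul, add_zero]

lemma sep {a b : V} (hp : parent hpre r a = parent hpre r b) (hne : a ≠ b)
    (har : a ≠ r) (hbr : b ≠ r) {z : Plane}
    (h1 : ∃ s t : ℝ, 0 ≤ s ∧ 0 ≤ t ∧ z = s • e (lo hu hpre r a) + t • e (hi hu hpre r a))
    (h2 : ∃ s t : ℝ, 0 ≤ s ∧ 0 ≤ t ∧ z = s • e (lo hu hpre r b) + t • e (hi hu hpre r b)) :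
    z = 0 := by
  rcases siblings_disjoint hu hpre r hp hne har hbr with h | h
  · exact sep' hu hpre r h h1 h2
  · exact sep' hu hpre r h h2 h1


lemma seg_sub {x y q p : Plane} (hp : p ∈ segment ℝ x y) :
    ∃ α β : ℝ, 0 ≤ α ∧ 0 ≤ β ∧ α + β = 1 ∧ p - q = α • (x - q) + β • (y - q) := by
  obtain ⟨α, β, hα, hβ, hαβ, hsum⟩ := hp
  refine ⟨α, β, hα, hβ, hαβ, ?_⟩
  rw [← hsum]
  have h : α • x + β • y - q = α • (x - q) + β • (y - q) + (α + β - 1) • q := by module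
  rw [h, hαβ]; simp

lemma diff_par {c : V} (hcr : c ≠ r) :
    emb hu hpre r c - emb hu hpre r (parent hpre r c) = e (th hu hpre r c) := by
  rw [emb_ne hu hpre r hcr]; abel

lemma par_diff {c : V} (hcr : c ≠ r) :
    emb hu hpre r (parent hpre r c) - emb hu hpre r c = -e (th hu hpre r c) := by
  rw [emb_ne hu hpre r hcr]; abel

/-- the edge above `a` is contained in the cone of any non-root ancestor `c` of `a` -/
lemma seg_rep {a c : V} (har : a ≠ r) (hcr : c ≠ r) (hc : c ∈ supp hpre r a) {p : Plane}
    (hp : p ∈ segment ℝ (emb hu hpre r (parent hpre r a)) (emb hu hpre r a)) :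
    ∃ s t : ℝ, 0 ≤ s ∧ 0 ≤ t ∧
      p - emb hu hpre r (parent hpre r c)
        = s • e (lo hu hpre r c) + t • e (hi hu hpre r c) := by
  obtain ⟨α, β, hα, hβ, hαβ, hdiff⟩ := seg_sub (q := emb hu hpre r (parent hpre r c)) hp
  obtain ⟨s1, t1, hs1, ht1, hr1⟩ := (inv hu hpre r a c hc hcr).1
  by_cases hca : c = a
  · subst hca
    refine ⟨β * s1, β * t1, by positivity, by positivity, ?_⟩
    rw [hdiff, hr1, sub_self, smul_zero, zero_add]
    module
  · obtain ⟨_, hc'⟩ := supp_strict hu hpre r hc hca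
    obtain ⟨s0, t0, hs0, ht0, hr0⟩ := (inv hu hpre r (parent hpre r a) c hc' hcr).1
    refine ⟨α * s0 + β * s1, α * t0 + β * t1, by positivity, by positivity, ?_⟩
    rw [hdiff, hr0, hr1]
    module

/-- if `c` is a non-root ancestor of `parent a`, points of the edge above `a`
have `D`-value at least `c0` relative to `parent c` -/
lemma seg_D {a c : V} (har : a ≠ r) (hcr : c ≠ r)
    (hc : c ∈ supp hpre r (parent hpre r a)) {p : Plane}
    (hp : p ∈ segment ℝ (emb hu hpre r (parent hpre r a)) (emb hu hpre r a))
    (m : ℝ) (hm1 : 0 ≤ m) (hm2 : m ≤ π/4) :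
    c0 ≤ D (p - emb hu hpre r (parent hpre r c)) m := by
  obtain ⟨α, β, hα, hβ, hαβ, hdiff⟩ := seg_sub (q := emb hu hpre r (parent hpre r c)) hp
  have d0 := (inv hu hpre r (parent hpre r a) c hc hcr).2 m hm1 hm2
  have hca : c ∈ supp hpre r a :=
    supp_subset hu hpre r (parent_mem_supp hu hpre r har) hc
  have d1 := (inv hu hpre r a c hca hcr).2 m hm1 hm2
  rw [hdiff, D_add, D_smul, D_smul]
  have hs : α * c0 + β * c0 = c0 := by rw [← add_mul, hαβ, one_mul]
  linarith [mul_le_mul_of_nonneg_left d0 hα, mul_le_mul_of_nonneg_left d1 hβ]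

/-- points of the edge above `c` have nonpositive `D`-value relative to `c` -/
lemma seg_back {c : V} (hcr : c ≠ r) {p : Plane}
    (hp : p ∈ segment ℝ (emb hu hpre r (parent hpre r c)) (emb hu hpre r c))
    (m : ℝ) (hm1 : 0 ≤ m) (hm2 : m ≤ π/4) :
    D (p - emb hu hpre r c) m ≤ 0 := by
  obtain ⟨α, β, hα, hβ, hαβ, hdiff⟩ := seg_sub (q := emb hu hpre r c) hp
  rw [hdiff, sub_self, smul_zero, add_zero, par_diff hu hpre r hcr]
  have hDneg : D (α • -e (th hu hpre r c)) m = α * (-Real.cos (th hu hpre r c - m)) := by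
    rw [D_smul]
    have : D (-e (th hu hpre r c)) m = -D (e (th hu hpre r c)) m := by
      simp [D]; ring
    rw [this, D_e]
  rw [hDneg]
  obtain ⟨t3, t4⟩ := th_range hu hpre r c
  have := cos_ge_c0 t3 t4 hm1 hm2
  have := c0_pos
  nlinarith

/-- points of the edge above `a` relative to `parent a` -/
lemma seg_fwd {a : V} (har : a ≠ r) {p : Plane}
    (hp : p ∈ segment ℝ (emb hu hpre r (parent hpre r a)) (emb hu hpre r a)) :
    ∃ β : ℝ, 0 ≤ β ∧ p - emb hu hpre r (parent hpre r a) = β • e (th hu hpre r a) := by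
  obtain ⟨α, β, hα, hβ, hαβ, hdiff⟩ := seg_sub (q := emb hu hpre r (parent hpre r a)) hp
  refine ⟨β, hβ, ?_⟩
  rw [hdiff, sub_self, smul_zero, zero_add, diff_par hu hpre r har]

lemma emb_inj {u x : V} (hne : u ≠ x) : emb hu hpre r u ≠ emb hu hpre r x := by
  have hc0 := c0_pos
  by_cases h1 : x ∈ supp hpre r u
  · obtain ⟨c, hc1, hc2, hc3⟩ := child_exists hu hpre r u x h1 (Ne.symm hne)
    have hD := (inv hu hpre r u c hc1 hc2).2 0 (le_refl 0) (by positivity)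
    rw [hc3] at hD
    intro heq
    rw [heq, sub_self, D_zero] at hD
    linarith
  · by_cases h2 : u ∈ supp hpre r x
    · obtain ⟨c, hc1, hc2, hc3⟩ := child_exists hu hpre r x u h2 hne
      have hD := (inv hu hpre r x c hc1 hc2).2 0 (le_refl 0) (by positivity)
      rw [hc3] at hD
      intro heq
      rw [← heq, sub_self, D_zero] at hD
      linarith
    · obtain ⟨a, b, ha, hb, har, hbr, hab, hne'⟩ := meet_exists hu hpre r u x h1 h2
      intro heq
      have r1 := (inv hu hpre r u a ha har).1
      have r2 := (inv hu hpre r x b hb hbr).1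
      rw [← heq, ← hab] at r2
      have hz := sep hu hpre r hab hne' har hbr r1 r2
      have hD := (inv hu hpre r u a ha har).2 0 (le_refl 0) (by positivity)
      rw [hz, D_zero] at hD
      linarith

lemma not_on_edge {a w : V} (har : a ≠ r) (hwa : w ≠ a) (hwpa : w ≠ parent hpre r a) :
    emb hu hpre r w ∉ segment ℝ (emb hu hpre r (parent hpre r a)) (emb hu hpre r a) := by
  intro hp
  have hc0 := c0_pos
  have hpi : (0:ℝ) ≤ π/4 := by positivity
  by_cases h1 : w ∈ supp hpre r a
  · -- w is a strict ancestor of parent a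
    obtain ⟨_, h1'⟩ := supp_strict hu hpre r h1 hwa
    obtain ⟨c, hc1, hc2, hc3⟩ := child_exists hu hpre r (parent hpre r a) w h1' hwpa
    have hD := seg_D hu hpre r har hc2 hc1 hp 0 (le_refl 0) hpi
    rw [hc3, sub_self, D_zero] at hD
    linarith
  · by_cases h2 : a ∈ supp hpre r w
    · -- w is a strict descendant of a
      obtain ⟨c, hc1, hc2, hc3⟩ := child_exists hu hpre r w a h2 (Ne.symm hwa)
      have hD := (inv hu hpre r w c hc1 hc2).2 0 (le_refl 0) hpi
      rw [hc3] at hD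
      have hB := seg_back hu hpre r har hp 0 (le_refl 0) hpi
      linarith
    · -- incomparable
      obtain ⟨wa, ww, hwa', hww', hwar, hwwr, habp, hnewb⟩ :=
        meet_exists hu hpre r a w h1 h2
      have r1 := seg_rep hu hpre r har hwar hwa' hp
      have r2 := (inv hu hpre r w ww hww' hwwr).1
      rw [← habp] at r2
      have hz := sep hu hpre r habp hnewb hwar hwwr r1 r2
      have hD := (inv hu hpre r w ww hww' hwwr).2 0 (le_refl 0) hpi
      rw [← habp, hz, D_zero] at hD
      linarith


lemma setOf_swap {A B : V → Prop} {f : V → Plane} :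
    {p : Plane | ∃ w, A w ∧ B w ∧ p = f w} = {p : Plane | ∃ w, B w ∧ A w ∧ p = f w} := by
  ext p
  constructor <;> rintro ⟨w, h1, h2, h3⟩ <;> exact ⟨w, h2, h1, h3⟩

lemma core3_consec {a b : V} (har : a ≠ r) (hbr : b ≠ r) (hne : a ≠ b)
    (hpab : parent hpre r a = b) :
    segment ℝ (emb hu hpre r (parent hpre r a)) (emb hu hpre r a)
      ∩ segment ℝ (emb hu hpre r (parent hpre r b)) (emb hu hpre r b)
    = {p : Plane | ∃ w, (w = parent hpre r a ∨ w = a) ∧ (w = parent hpre r b ∨ w = b)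
        ∧ p = emb hu hpre r w} := by
  have hc0 := c0_pos
  obtain ⟨tr1, tr2⟩ := th_range hu hpre r a
  ext p
  simp only [Set.mem_inter_iff, Set.mem_setOf_eq]
  constructor
  · rintro ⟨hp1, hp2⟩
    obtain ⟨β, hβ, hfwd⟩ := seg_fwd hu hpre r har hp1
    rw [hpab] at hfwd
    have hback := seg_back hu hpre r hbr hp2 (th hu hpre r a) tr1 tr2
    have hDval : D (p - emb hu hpre r b) (th hu hpre r a) = β := by
      rw [hfwd, D_smul, D_e, sub_self, Real.cos_zero, mul_one]
    have hβ0 : β = 0 := le_antisymm (by rw [← hDval]; exact hback) hβ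
    have hpb : p = emb hu hpre r b := by
      rw [hβ0, zero_smul] at hfwd
      exact sub_eq_zero.mp hfwd
    exact ⟨b, Or.inl hpab.symm, Or.inr rfl, hpb⟩
  · rintro ⟨w, hw1, hw2, rfl⟩
    have hda := dep_parent hu hpre r har
    have hdb := dep_parent hu hpre r hbr
    have hwb : w = b := by
      rcases hw1 with h1 | h1
      · exact h1.trans hpab
      · rcases hw2 with h2 | h2
        · -- w = a and w = parent b
          exfalso
          rw [h1] at h2
          rw [hpab] at hda
          rw [← h2] at hdb
          omega
        · exact h2
    subst hwb
    constructor
    · rw [hpab]; exact left_mem_segment ℝ _ _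
    · exact right_mem_segment ℝ _ _

lemma core3_anc {a b : V} (har : a ≠ r) (hbr : b ≠ r)
    (hbpa : b ∈ supp hpre r (parent hpre r a)) (hbne : b ≠ parent hpre r a) :
    segment ℝ (emb hu hpre r (parent hpre r a)) (emb hu hpre r a)
      ∩ segment ℝ (emb hu hpre r (parent hpre r b)) (emb hu hpre r b)
    = {p : Plane | ∃ w, (w = parent hpre r a ∨ w = a) ∧ (w = parent hpre r b ∨ w = b)
        ∧ p = emb hu hpre r w} := by
  have hc0 := c0_pos
  have hpi : (0:ℝ) ≤ π/4 := by positivity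
  have hda := dep_parent hu hpre r har
  have hdb := dep_parent hu hpre r hbr
  ext p
  simp only [Set.mem_inter_iff, Set.mem_setOf_eq]
  constructor
  · rintro ⟨hp1, hp2⟩
    exfalso
    obtain ⟨c, hc1, hc2, hc3⟩ := child_exists hu hpre r (parent hpre r a) b hbpa hbne
    have hD := seg_D hu hpre r har hc2 hc1 hp1 0 (le_refl 0) hpi
    rw [hc3] at hD
    have hB := seg_back hu hpre r hbr hp2 0 (le_refl 0) hpi
    linarith
  · rintro ⟨w, hw1, hw2, rfl⟩
    exfalso
    have hsub : supp hpre r b ⊆ supp hpre r (parent hpre r a) :=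
      supp_subset hu hpre r hbpa
    rcases hw1 with h1 | h1 <;> rcases hw2 with h2 | h2
    · -- parent a = parent b
      have hpp : parent hpre r a = parent hpre r b := by rw [← h1, ← h2]
      have m1 : b ∈ supp hpre r (parent hpre r b) := by rw [← hpp]; exact hbpa
      have m2 : parent hpre r b ∈ supp hpre r b := parent_mem_supp hu hpre r hbr
      have heq := supp_anti hu hpre r m1 m2
      rw [heq] at hdb
      omega
    · -- parent a = b
      exact hbne (by rw [← h1, ← h2])
    · -- a = parent b
      have hab : a = parent hpre r b := h1.symm.trans h2
      have h3 : parent hpre r b ∈ supp hpre r (parent hpre r a) :=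
        hsub (parent_mem_supp hu hpre r hbr)
      rw [← hab] at h3
      have := dep_le hu hpre r h3
      omega
    · -- a = b
      have hab : a = b := h1.symm.trans h2
      rw [← hab] at hbpa
      have := dep_le hu hpre r hbpa
      omega

lemma core3_sib {a b : V} (har : a ≠ r) (hbr : b ≠ r) (hne : a ≠ b)
    (hpp : parent hpre r a = parent hpre r b) :
    segment ℝ (emb hu hpre r (parent hpre r a)) (emb hu hpre r a)
      ∩ segment ℝ (emb hu hpre r (parent hpre r b)) (emb hu hpre r b)
    = {p : Plane | ∃ w, (w = parent hpre r a ∨ w = a) ∧ (w = parent hpre r b ∨ w = b)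
        ∧ p = emb hu hpre r w} := by
  have hda := dep_parent hu hpre r har
  have hdb := dep_parent hu hpre r hbr
  obtain ⟨ta1, ta2⟩ := th_mem hu hpre r a
  obtain ⟨tb1, tb2⟩ := th_mem hu hpre r b
  obtain ⟨ba1, ba2, ba3⟩ := ivl_bounds hu hpre r a
  obtain ⟨bb1, bb2, bb3⟩ := ivl_bounds hu hpre r b
  ext p
  simp only [Set.mem_inter_iff, Set.mem_setOf_eq]
  constructor
  · rintro ⟨hp1, hp2⟩
    obtain ⟨β, hβ, hfwd⟩ := seg_fwd hu hpre r har hp1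
    obtain ⟨β', hβ', hfwd'⟩ := seg_fwd hu hpre r hbr hp2
    rw [← hpp] at hfwd'
    obtain ⟨s, t, hs, ht, hra⟩ := e_rep ta1.le ta2.le ba2 (by linarith)
    obtain ⟨s', t', hs', ht', hrb⟩ := e_rep tb1.le tb2.le bb2 (by linarith)
    have h1 : ∃ s t : ℝ, 0 ≤ s ∧ 0 ≤ t ∧ p - emb hu hpre r (parent hpre r a)
        = s • e (lo hu hpre r a) + t • e (hi hu hpre r a) :=
      ⟨β * s, β * t, by positivity, by positivity, by rw [hfwd, hra]; module⟩
    have h2 : ∃ s t : ℝ, 0 ≤ s ∧ 0 ≤ t ∧ p - emb hu hpre r (parent hpre r a)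
        = s • e (lo hu hpre r b) + t • e (hi hu hpre r b) :=
      ⟨β' * s', β' * t', by positivity, by positivity, by rw [hfwd', hrb]; module⟩
    have hz := sep hu hpre r hpp hne har hbr h1 h2
    have hpb : p = emb hu hpre r (parent hpre r a) := sub_eq_zero.mp hz
    exact ⟨parent hpre r a, Or.inl rfl, Or.inl hpp, hpb⟩
  · rintro ⟨w, hw1, hw2, rfl⟩
    have hwpa : w = parent hpre r a := by
      rcases hw1 with h1 | h1
      · exact h1
      · rcases hw2 with h2 | h2
        · -- a = parent b = parent a: impossible
          exfalso
          rw [h1] at h2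
          rw [← hpp] at h2
          rw [← h2] at hda
          omega
        · exact absurd (h1.symm.trans h2) hne
    subst hwpa
    exact ⟨left_mem_segment ℝ _ _, by rw [hpp]; exact left_mem_segment ℝ _ _⟩

lemma core3_meet {a b : V} (har : a ≠ r) (hbr : b ≠ r)
    (h1 : b ∉ supp hpre r a) (h2 : a ∉ supp hpre r b)
    (hpp : parent hpre r a ≠ parent hpre r b) :
    segment ℝ (emb hu hpre r (parent hpre r a)) (emb hu hpre r a)
      ∩ segment ℝ (emb hu hpre r (parent hpre r b)) (emb hu hpre r b)
    = {p : Plane | ∃ w, (w = parent hpre r a ∨ w = a) ∧ (w = parent hpre r b ∨ w = b)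
        ∧ p = emb hu hpre r w} := by
  have hc0 := c0_pos
  have hpi : (0:ℝ) ≤ π/4 := by positivity
  ext p
  simp only [Set.mem_inter_iff, Set.mem_setOf_eq]
  constructor
  · rintro ⟨hp1, hp2⟩
    exfalso
    obtain ⟨wa, wb, hwa, hwb, hwar, hwbr, hpar, hnew⟩ := meet_exists hu hpre r a b h1 h2
    have rA := seg_rep hu hpre r har hwar hwa hp1
    have rB := seg_rep hu hpre r hbr hwbr hwb hp2
    rw [← hpar] at rB
    have hz := sep hu hpre r hpar hnew hwar hwbr rA rB
    have hpq : p = emb hu hpre r (parent hpre r wa) := sub_eq_zero.mp hz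
    by_cases hwaa : wa = a
    · -- then parent wa = parent a, so look at the b side
      have hwbb : wb ≠ b := by
        intro hwbb
        apply hpp
        rw [← hwaa, ← hwbb]
        exact hpar
      obtain ⟨_, hwb'⟩ := supp_strict hu hpre r hwb hwbb
      have hD := seg_D hu hpre r hbr hwbr hwb' hp2 0 (le_refl 0) hpi
      rw [← hpar, ← hpq, sub_self, D_zero] at hD
      linarith
    · obtain ⟨_, hwa'⟩ := supp_strict hu hpre r hwa hwaa
      have hD := seg_D hu hpre r har hwar hwa' hp1 0 (le_refl 0) hpi
      rw [← hpq, sub_self, D_zero] at hD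
      linarith
  · rintro ⟨w, hw1, hw2, rfl⟩
    exfalso
    rcases hw1 with h1' | h1' <;> rcases hw2 with h2' | h2'
    · exact hpp (by rw [← h1', ← h2'])
    · -- parent a = b
      exact h1 ((h1'.symm.trans h2') ▸ parent_mem_supp hu hpre r har)
    · -- a = parent b
      exact h2 ((h1'.symm.trans h2') ▸ parent_mem_supp hu hpre r hbr)
    · exact h1 ((h1'.symm.trans h2') ▸ self_mem_supp hpre r b)

lemma core3 {a b : V} (har : a ≠ r) (hbr : b ≠ r) (hne : a ≠ b) :
    segment ℝ (emb hu hpre r (parent hpre r a)) (emb hu hpre r a)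
      ∩ segment ℝ (emb hu hpre r (parent hpre r b)) (emb hu hpre r b)
    = {p : Plane | ∃ w, (w = parent hpre r a ∨ w = a) ∧ (w = parent hpre r b ∨ w = b)
        ∧ p = emb hu hpre r w} := by
  by_cases h1 : b ∈ supp hpre r a
  · by_cases hb : parent hpre r a = b
    · exact core3_consec hu hpre r har hbr hne hb
    · exact core3_anc hu hpre r har hbr
        (supp_strict hu hpre r h1 (Ne.symm hne)).2 (fun h => hb h.symm)
  · by_cases h2 : a ∈ supp hpre r b
    · rw [Set.inter_comm]
      by_cases hb : parent hpre r b = a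
      · rw [core3_consec hu hpre r hbr har (Ne.symm hne) hb]
        exact setOf_swap
      · rw [core3_anc hu hpre r hbr har
          (supp_strict hu hpre r h2 hne).2 (fun h => hb h.symm)]
        exact setOf_swap
    · by_cases hpp : parent hpre r a = parent hpre r b
      · exact core3_sib hu hpre r har hbr hne hpp
      · exact core3_meet hu hpre r har hbr h1 h2 hpp

include hu in
lemma orient {u v : V} (hadj : G.Adj u v) :
    ∃ a, a ≠ r ∧ ((u = a ∧ v = parent hpre r a) ∨ (u = parent hpre r a ∧ v = a)) := by
  rcases adj_orient hu hpre r hadj with ⟨hh1, hh2⟩ | ⟨hh1, hh2⟩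
  · exact ⟨u, hh1, Or.inl ⟨rfl, hh2.symm⟩⟩
  · exact ⟨v, hh1, Or.inr ⟨hh2.symm, rfl⟩⟩

end Emb
end TreeDraw


/-- Every finite tree admits a planar straight-line drawing in which every
edge has length exactly 1. -/
theorem tree_unit_drawing {V : Type} [Fintype V] (G : SimpleGraph V)
    (hconn : G.Connected) (hacyclic : G.IsAcyclic) :
    ∃ ρ : V → Plane, IsPlanarDrawing G ρ ∧
      ∀ u v : V, G.Adj u v → dist (ρ u) (ρ v) = 1 := by
  letI := Classical.decEq V
  have hnv : Nonempty V := hconn.nonempty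
  set r : V := Classical.arbitrary V with hrdef
  have hpre : G.Preconnected := hconn.preconnected
  have hu : ∀ ⦃u v : V⦄ (p q : G.Walk u v), p.IsPath → q.IsPath → p = q := by
    intro u v p q hp hq
    exact congrArg Subtype.val
      (SimpleGraph.isAcyclic_iff_path_unique.mp hacyclic ⟨p, hp⟩ ⟨q, hq⟩)
  refine ⟨TreeDraw.emb hu hpre r, ⟨?_, ?_, ?_⟩, ?_⟩
  · -- injective
    intro u x h
    by_contra hne
    exact TreeDraw.emb_inj hu hpre r hne h
  · -- no vertex in the interior of an edge
    intro u v w hadj hwu hwv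
    obtain ⟨a, har, hA⟩ := TreeDraw.orient hu hpre r hadj
    rcases hA with ⟨rfl, rfl⟩ | ⟨rfl, rfl⟩
    · rw [segment_symm]
      exact TreeDraw.not_on_edge hu hpre r har hwu hwv
    · exact TreeDraw.not_on_edge hu hpre r har hwv hwu
  · -- edges intersect properly
    intro u v x y hadj1 hadj2 hsne
    obtain ⟨a, har, hA⟩ := TreeDraw.orient hu hpre r hadj1
    obtain ⟨b, hbr, hB⟩ := TreeDraw.orient hu hpre r hadj2
    have hne : a ≠ b := by
      rintro rfl
      apply hsne
      have e1 : s(u, v) = s(a, TreeDraw.parent hpre r a) := by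
        rcases hA with ⟨rfl, rfl⟩ | ⟨rfl, rfl⟩
        · rfl
        · exact Sym2.eq_swap
      have e2 : s(x, y) = s(a, TreeDraw.parent hpre r a) := by
        rcases hB with ⟨rfl, rfl⟩ | ⟨rfl, rfl⟩
        · rfl
        · exact Sym2.eq_swap
      rw [e1, e2]
    have key := TreeDraw.core3 hu hpre r har hbr hne
    have hseg1 : segment ℝ (TreeDraw.emb hu hpre r u) (TreeDraw.emb hu hpre r v)
        = segment ℝ (TreeDraw.emb hu hpre r (TreeDraw.parent hpre r a))
            (TreeDraw.emb hu hpre r a) := by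
      rcases hA with ⟨h1, h2⟩ | ⟨h1, h2⟩ <;> rw [h1, h2]
      exact segment_symm ℝ _ _
    have hseg2 : segment ℝ (TreeDraw.emb hu hpre r x) (TreeDraw.emb hu hpre r y)
        = segment ℝ (TreeDraw.emb hu hpre r (TreeDraw.parent hpre r b))
            (TreeDraw.emb hu hpre r b) := by
      rcases hB with ⟨h1, h2⟩ | ⟨h1, h2⟩ <;> rw [h1, h2]
      exact segment_symm ℝ _ _
    have hset : ({p : TreeDraw.Plane | ∃ w, (w = u ∨ w = v) ∧ (w = x ∨ w = y)
          ∧ p = TreeDraw.emb hu hpre r w})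
        = {p : TreeDraw.Plane | ∃ w, (w = TreeDraw.parent hpre r a ∨ w = a)
            ∧ (w = TreeDraw.parent hpre r b ∨ w = b) ∧ p = TreeDraw.emb hu hpre r w} := by
      rcases hA with ⟨h1, h2⟩ | ⟨h1, h2⟩ <;> rcases hB with ⟨h3, h4⟩ | ⟨h3, h4⟩
      all_goals subst h1; subst h2; subst h3; subst h4
      all_goals ext p
      all_goals simp only [Set.mem_setOf_eq]
      all_goals exact ⟨fun ⟨w, hh1, hh2, hh3⟩ => ⟨w, by tauto, by tauto, hh3⟩,
        fun ⟨w, hh1, hh2, hh3⟩ => ⟨w, by tauto, by tauto, hh3⟩⟩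
    rw [hseg1, hseg2, key]
    exact hset.symm
  · -- unit lengths
    intro u v hadj
    obtain ⟨a, har, hA⟩ := TreeDraw.orient hu hpre r hadj
    rcases hA with ⟨rfl, rfl⟩ | ⟨rfl, rfl⟩
    · rw [dist_eq_norm, TreeDraw.diff_par hu hpre r har, TreeDraw.norm_e]
    · rw [dist_comm, dist_eq_norm, TreeDraw.diff_par hu hpre r har, TreeDraw.norm_e]
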